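/- (Corollary 1, Werner case.) For the shared Werner state ρ_W(p) with 0 ≤ p ≤ 1 and every z, u : ℝ, P₊(Π(z,u)) − P₋(Π(z,u)) = 4·p·sin u·sin z·sin α / (−3 + cos(2α)). In particular, if Bob's measurement is real (u = 0), or p = 0, or sin α = 0, then P₊(Π(z,u)) = P₋(Π(z,u)). -/

import Mathlib

open Matrix Kronecker Complex
open scoped ComplexOrder

noncomputable section

/-- Pauli matrix `σx`. -/
def σx : Matrix (Fin 2) (Fin 2) ℂ := !![0, 1; 1, 0]

/-- Pauli matrix `σy`. -/
def σy : Matrix (Fin 2) (Fin 2) ℂ := !![0, -Complex.I; Complex.I, 0]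

/-- Pauli matrix `σz`. -/
def σz : Matrix (Fin 2) (Fin 2) ℂ := !![1, 0; 0, -1]

/-- The simulated PT-symmetric evolution operator at the chosen time. -/
def Upt (α : ℝ) : Matrix (Fin 2) (Fin 2) ℂ :=
  !![(Real.sin α : ℂ), -Complex.I; -Complex.I, -(Real.sin α : ℂ)]

/-- Alice's operation `A₊` (do nothing). -/
def Apos : Matrix (Fin 2) (Fin 2) ℂ := 1

/-- Alice's operation `A₋` (bit flip `σx`). -/
def Aneg : Matrix (Fin 2) (Fin 2) ℂ := σx

/-- Unnormalized post-selected state after Alice applies `A₊` followed by the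
simulated PT evolution. -/
def postPlus (α : ℝ) (ρ : Matrix (Fin 2 × Fin 2) (Fin 2 × Fin 2) ℂ) :
    Matrix (Fin 2 × Fin 2) (Fin 2 × Fin 2) ℂ :=
  ((Upt α * Apos) ⊗ₖ (1 : Matrix (Fin 2) (Fin 2) ℂ)) * ρ *
    ((Upt α * Apos) ⊗ₖ (1 : Matrix (Fin 2) (Fin 2) ℂ))ᴴ

/-- Unnormalized post-selected state after Alice applies `A₋` followed by the
simulated PT evolution. -/
def postMinus (α : ℝ) (ρ : Matrix (Fin 2 × Fin 2) (Fin 2 × Fin 2) ℂ) :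
    Matrix (Fin 2 × Fin 2) (Fin 2 × Fin 2) ℂ :=
  ((Upt α * Aneg) ⊗ₖ (1 : Matrix (Fin 2) (Fin 2) ℂ)) * ρ *
    ((Upt α * Aneg) ⊗ₖ (1 : Matrix (Fin 2) (Fin 2) ℂ))ᴴ

/-- Probability that Bob obtains outcome `Π` given Alice applied `A₊`. -/
def Pplus (α : ℝ) (ρ : Matrix (Fin 2 × Fin 2) (Fin 2 × Fin 2) ℂ)
    (Pi : Matrix (Fin 2) (Fin 2) ℂ) : ℝ :=
  ((((1 : Matrix (Fin 2) (Fin 2) ℂ) ⊗ₖ Pi) * postPlus α ρ).trace).re /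
    ((postPlus α ρ).trace).re

/-- Probability that Bob obtains outcome `Π` given Alice applied `A₋`. -/
def Pminus (α : ℝ) (ρ : Matrix (Fin 2 × Fin 2) (Fin 2 × Fin 2) ℂ)
    (Pi : Matrix (Fin 2) (Fin 2) ℂ) : ℝ :=
  ((((1 : Matrix (Fin 2) (Fin 2) ℂ) ⊗ₖ Pi) * postMinus α ρ).trace).re /
    ((postMinus α ρ).trace).re

/-- Bob's `σy`-measurement projector onto `|+_y⟩ = (|0⟩ + i|1⟩)/√2`. -/
def Piy : Matrix (Fin 2) (Fin 2) ℂ :=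
  (1/2 : ℂ) • !![1, -Complex.I; Complex.I, 1]

/-- Bob's rank-one projector `Π(z,u)` for an arbitrary projective measurement. -/
def Pizu (z u : ℝ) : Matrix (Fin 2) (Fin 2) ℂ :=
  !![((Real.cos (z/2))^2 : ℂ),
     (Real.cos (z/2) : ℂ) * (Real.sin (z/2) : ℂ) * Complex.exp (-(Complex.I * u));
     (Real.cos (z/2) : ℂ) * (Real.sin (z/2) : ℂ) * Complex.exp (Complex.I * u),
     ((Real.sin (z/2))^2 : ℂ)]

/-- The single-qubit state `|+⟩ = (|0⟩ + |1⟩)/√2`. -/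
def ketPlus : Fin 2 → ℂ := ![((1 / Real.sqrt 2 : ℝ) : ℂ), ((1 / Real.sqrt 2 : ℝ) : ℂ)]

/-- The single-qubit state `|−⟩ = (|0⟩ − |1⟩)/√2`. -/
def ketMinus : Fin 2 → ℂ := ![((1 / Real.sqrt 2 : ℝ) : ℂ), ((-(1 / Real.sqrt 2) : ℝ) : ℂ)]

/-- The (normalized) pure state `|ψ_{β,γ}⟩ = (β|++⟩ + γ|−−⟩)/√(β²+γ²)`. -/
def ψpure (β γ : ℝ) : Fin 2 × Fin 2 → ℂ := fun q =>
  ((β : ℂ) * (ketPlus q.1 * ketPlus q.2) + (γ : ℂ) * (ketMinus q.1 * ketMinus q.2)) /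
    ((Real.sqrt (β^2 + γ^2) : ℝ) : ℂ)

/-- The pure two-qubit density matrix `ρ_{β,γ} = |ψ_{β,γ}⟩⟨ψ_{β,γ}|`. -/
def ρpure (β γ : ℝ) : Matrix (Fin 2 × Fin 2) (Fin 2 × Fin 2) ℂ :=
  Matrix.vecMulVec (ψpure β γ) (fun q => starRingEnd ℂ (ψpure β γ q))

/-- The maximally entangled state `|ψ⁺⟩ = (|00⟩ + |11⟩)/√2`. -/
def ψmax : Fin 2 × Fin 2 → ℂ := fun q =>
  if q.1 = q.2 then ((1 / Real.sqrt 2 : ℝ) : ℂ) else 0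

/-- The two-qubit Werner state `ρ_W(p) = p |ψ⁺⟩⟨ψ⁺| + ((1-p)/4) 1`. -/
def ρWerner (p : ℝ) : Matrix (Fin 2 × Fin 2) (Fin 2 × Fin 2) ℂ :=
  (p : ℂ) • Matrix.vecMulVec ψmax (fun q => starRingEnd ℂ (ψmax q)) +
    (((1 - p) / 4 : ℝ) : ℂ) • 1

/-- The canonical two-qubit state with magnetizations `mx my mz` (Alice),
`nx ny nz` (Bob) and diagonal correlators `Cxx Cyy Czz`. -/
def ρcan (mx my mz nx ny nz Cxx Cyy Czz : ℝ) :
    Matrix (Fin 2 × Fin 2) (Fin 2 × Fin 2) ℂ :=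
  (1/4 : ℂ) • ((1 : Matrix (Fin 2 × Fin 2) (Fin 2 × Fin 2) ℂ)
    + (mx : ℂ) • (σx ⊗ₖ (1 : Matrix (Fin 2) (Fin 2) ℂ))
    + (my : ℂ) • (σy ⊗ₖ (1 : Matrix (Fin 2) (Fin 2) ℂ))
    + (mz : ℂ) • (σz ⊗ₖ (1 : Matrix (Fin 2) (Fin 2) ℂ))
    + (nx : ℂ) • ((1 : Matrix (Fin 2) (Fin 2) ℂ) ⊗ₖ σx)
    + (ny : ℂ) • ((1 : Matrix (Fin 2) (Fin 2) ℂ) ⊗ₖ σy)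
    + (nz : ℂ) • ((1 : Matrix (Fin 2) (Fin 2) ℂ) ⊗ₖ σz)
    + (Cxx : ℂ) • (σx ⊗ₖ σx)
    + (Cyy : ℂ) • (σy ⊗ₖ σy)
    + (Czz : ℂ) • (σz ⊗ₖ σz))

/-- Bob's reduced matrix: the partial trace over Alice's subsystem. -/
def ptraceA (X : Matrix (Fin 2 × Fin 2) (Fin 2 × Fin 2) ℂ) :
    Matrix (Fin 2) (Fin 2) ℂ :=
  Matrix.of fun i j => ∑ k : Fin 2, X (k, i) (k, j)

/-- The trace distance `T(A,B) = (1/2) tr √((A-B)ᴴ (A-B))`, where the square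
root is the positive semidefinite square root. -/
def traceDist (A B : Matrix (Fin 2) (Fin 2) ℂ) : ℝ :=
  (1/2) * ((((Matrix.posSemidef_conjTranspose_mul_self (A - B)).1.eigenvectorUnitary.1 *
    diagonal (((↑) : ℝ → ℂ) ∘ (Real.sqrt ·) ∘ (Matrix.posSemidef_conjTranspose_mul_self (A - B)).1.eigenvalues) *
    (star (Matrix.posSemidef_conjTranspose_mul_self (A - B)).1.eigenvectorUnitary :
      Matrix (Fin 2) (Fin 2) ℂ)).trace).re)

lemma hψmax : Matrix.vecMulVec ψmax (fun q => starRingEnd ℂ (ψmax q)) =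
    Matrix.of (fun q r => if q.1 = q.2 ∧ r.1 = r.2 then (1/2 : ℂ) else 0) := by
  ext ⟨i,j⟩ ⟨k,l⟩
  fin_cases i <;> fin_cases j <;> fin_cases k <;> fin_cases l <;>
    simp [ψmax, Matrix.vecMulVec_apply] <;>
    norm_num [← Complex.ofReal_mul, Real.mul_self_sqrt, ← mul_inv, ← Complex.ofReal_inv]

lemma trPlus (α p : ℝ) :
    (postPlus α (ρWerner p)).trace = ((1 + Real.sin α^2 : ℝ) : ℂ) := by
  simp only [postPlus, Upt, Apos, ρWerner, hψmax, Matrix.trace, Matrix.mul_apply,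
    Fintype.sum_prod_type, Fin.sum_univ_two, Matrix.kroneckerMap_apply,
    Matrix.one_apply, Matrix.conjTranspose_apply,
    Matrix.smul_apply, Matrix.add_apply, Matrix.of_apply, Matrix.cons_val',
    Matrix.cons_val_zero, Matrix.cons_val_one, Matrix.head_cons, Matrix.head_fin_const,
    Matrix.diag_apply, mul_one, mul_zero, zero_mul, add_zero, zero_add,
    star_mul', star_one, star_zero, Complex.star_def, _root_.map_mul, Complex.conj_I,
    Complex.conj_ofReal, map_neg, _root_.map_one, _root_.map_zero,
    if_true, if_false, Prod.mk.injEq, one_ne_zero, zero_ne_one, and_self, and_false,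
    ite_true, ite_false, Fin.isValue, mul_ite, ite_mul]
  generalize Real.sin α = sa
  simp only [Complex.ext_iff, Complex.ofReal_add, Complex.ofReal_one, Complex.ofReal_pow]
  constructor <;> simp [← Complex.ofReal_pow] <;> ring

lemma trMinus (α p : ℝ) :
    (postMinus α (ρWerner p)).trace = ((1 + Real.sin α^2 : ℝ) : ℂ) := by
  simp only [postMinus, Upt, Aneg, σx, ρWerner, hψmax, Matrix.trace, Matrix.mul_apply,
    Fintype.sum_prod_type, Fin.sum_univ_two, Matrix.kroneckerMap_apply,
    Matrix.one_apply, Matrix.conjTranspose_apply,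
    Matrix.smul_apply, Matrix.add_apply, Matrix.of_apply, Matrix.cons_val',
    Matrix.cons_val_zero, Matrix.cons_val_one, Matrix.head_cons, Matrix.head_fin_const,
    Matrix.diag_apply, mul_one, mul_zero, zero_mul, add_zero, zero_add,
    star_mul', star_one, star_zero, Complex.star_def, _root_.map_mul, Complex.conj_I,
    Complex.conj_ofReal, map_neg, _root_.map_one, _root_.map_zero,
    if_true, if_false, Prod.mk.injEq, one_ne_zero, zero_ne_one, and_self, and_false,
    ite_true, ite_false, Fin.isValue, mul_ite, ite_mul]
  generalize Real.sin α = sa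
  simp only [Complex.ext_iff, Complex.ofReal_add, Complex.ofReal_one, Complex.ofReal_pow]
  constructor <;> simp [← Complex.ofReal_pow] <;> ring

lemma numPlus (α p z u : ℝ) :
    ((((1 : Matrix (Fin 2) (Fin 2) ℂ) ⊗ₖ Pizu z u) * postPlus α (ρWerner p)).trace) =
      (((1 + Real.sin α^2)/2
        - p * Real.sin α * (2 * Real.sin (z/2) * Real.cos (z/2)) * Real.sin u : ℝ) : ℂ) := by
  simp only [postPlus, Upt, Apos, ρWerner, hψmax, Pizu, Matrix.trace, Matrix.mul_apply,
    Fintype.sum_prod_type, Fin.sum_univ_two, Matrix.kroneckerMap_apply,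
    Matrix.one_apply, Matrix.conjTranspose_apply,
    Matrix.smul_apply, Matrix.add_apply, Matrix.of_apply, Matrix.cons_val',
    Matrix.cons_val_zero, Matrix.cons_val_one, Matrix.head_cons, Matrix.head_fin_const,
    Matrix.diag_apply, mul_one, mul_zero, zero_mul, add_zero, zero_add,
    star_mul', star_one, star_zero, Complex.star_def, _root_.map_mul, Complex.conj_I,
    Complex.conj_ofReal, map_neg, _root_.map_one, _root_.map_zero,
    if_true, if_false, Prod.mk.injEq, one_ne_zero, zero_ne_one, and_self, and_false,
    ite_true, ite_false, Fin.isValue, mul_ite, ite_mul]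
  rw [show Complex.I * (u:ℂ) = (u:ℂ) * Complex.I by ring,
    show -((u:ℂ) * Complex.I) = (-u : ℝ) * Complex.I by push_cast; ring,
    Complex.exp_mul_I, Complex.exp_mul_I,
    ← Complex.ofReal_cos, ← Complex.ofReal_sin, ← Complex.ofReal_cos, ← Complex.ofReal_sin,
    Real.cos_neg, Real.sin_neg]
  have h1 := Real.sin_sq_add_cos_sq u
  have h2 := Real.sin_sq_add_cos_sq (z/2)
  generalize Real.sin α = sa at *
  generalize Real.cos (z/2) = cz at *
  generalize Real.sin (z/2) = sz at *
  generalize Real.sin u = su at *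
  generalize Real.cos u = cu at *
  simp only [Complex.ext_iff, Complex.ofReal_sub, Complex.ofReal_div, Complex.ofReal_add,
    Complex.ofReal_mul, Complex.ofReal_pow, Complex.ofReal_one, Complex.ofReal_ofNat,
    Complex.ofReal_neg]
  constructor <;> simp [← Complex.ofReal_pow] <;> nlinarith [h1, h2]

lemma numMinus (α p z u : ℝ) :
    ((((1 : Matrix (Fin 2) (Fin 2) ℂ) ⊗ₖ Pizu z u) * postMinus α (ρWerner p)).trace) =
      (((1 + Real.sin α^2)/2
        + p * Real.sin α * (2 * Real.sin (z/2) * Real.cos (z/2)) * Real.sin u : ℝ) : ℂ) := by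
  simp only [postMinus, Upt, Aneg, σx, ρWerner, hψmax, Pizu, Matrix.trace, Matrix.mul_apply,
    Fintype.sum_prod_type, Fin.sum_univ_two, Matrix.kroneckerMap_apply,
    Matrix.one_apply, Matrix.conjTranspose_apply,
    Matrix.smul_apply, Matrix.add_apply, Matrix.of_apply, Matrix.cons_val',
    Matrix.cons_val_zero, Matrix.cons_val_one, Matrix.head_cons, Matrix.head_fin_const,
    Matrix.diag_apply, mul_one, mul_zero, zero_mul, add_zero, zero_add,
    star_mul', star_one, star_zero, Complex.star_def, _root_.map_mul, Complex.conj_I,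
    Complex.conj_ofReal, map_neg, _root_.map_one, _root_.map_zero,
    if_true, if_false, Prod.mk.injEq, one_ne_zero, zero_ne_one, and_self, and_false,
    ite_true, ite_false, Fin.isValue, mul_ite, ite_mul]
  rw [show Complex.I * (u:ℂ) = (u:ℂ) * Complex.I by ring,
    show -((u:ℂ) * Complex.I) = (-u : ℝ) * Complex.I by push_cast; ring,
    Complex.exp_mul_I, Complex.exp_mul_I,
    ← Complex.ofReal_cos, ← Complex.ofReal_sin, ← Complex.ofReal_cos, ← Complex.ofReal_sin,
    Real.cos_neg, Real.sin_neg]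
  have h1 := Real.sin_sq_add_cos_sq u
  have h2 := Real.sin_sq_add_cos_sq (z/2)
  generalize Real.sin α = sa at *
  generalize Real.cos (z/2) = cz at *
  generalize Real.sin (z/2) = sz at *
  generalize Real.sin u = su at *
  generalize Real.cos u = cu at *
  simp only [Complex.ext_iff, Complex.ofReal_sub, Complex.ofReal_div, Complex.ofReal_add,
    Complex.ofReal_mul, Complex.ofReal_pow, Complex.ofReal_one, Complex.ofReal_ofNat,
    Complex.ofReal_neg]
  constructor <;> simp [← Complex.ofReal_pow] <;> nlinarith [h1, h2]

/-- Corollary 1, Werner case: for the shared Werner state `ρ_W(p)` and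
arbitrary measurement `Π(z,u)` by Bob,
`P₊ − P₋ = 4 p sin u sin z sin α / (−3 + cos 2α)`; in particular if `u = 0`,
or `p = 0`, or `sin α = 0`, then `P₊ = P₋`. -/
theorem stmt12 (α p : ℝ) (hp0 : 0 ≤ p) (hp1 : p ≤ 1) :
    ∀ z u : ℝ,
      Pplus α (ρWerner p) (Pizu z u) - Pminus α (ρWerner p) (Pizu z u) =
        4 * p * Real.sin u * Real.sin z * Real.sin α / (-3 + Real.cos (2*α)) ∧
      (u = 0 ∨ p = 0 ∨ Real.sin α = 0 →
        Pplus α (ρWerner p) (Pizu z u) = Pminus α (ρWerner p) (Pizu z u)) := by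
  intro z u
  have hden : (0:ℝ) < 1 + Real.sin α ^ 2 := by positivity
  have hsz : Real.sin z = 2 * Real.sin (z/2) * Real.cos (z/2) := by
    rw [show z = 2*(z/2) by ring, Real.sin_two_mul]; ring_nf
  have hc2 : Real.cos (2*α) = 1 - 2 * Real.sin α ^ 2 := by
    rw [Real.cos_two_mul']; have := Real.sin_sq_add_cos_sq α; linarith
  have hP : Pplus α (ρWerner p) (Pizu z u) =
      ((1 + Real.sin α^2)/2
        - p * Real.sin α * (2 * Real.sin (z/2) * Real.cos (z/2)) * Real.sin u) /
      (1 + Real.sin α ^ 2) := by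
    unfold Pplus
    rw [numPlus, trPlus, Complex.ofReal_re, Complex.ofReal_re]
  have hM : Pminus α (ρWerner p) (Pizu z u) =
      ((1 + Real.sin α^2)/2
        + p * Real.sin α * (2 * Real.sin (z/2) * Real.cos (z/2)) * Real.sin u) /
      (1 + Real.sin α ^ 2) := by
    unfold Pminus
    rw [numMinus, trMinus, Complex.ofReal_re, Complex.ofReal_re]
  have key : Pplus α (ρWerner p) (Pizu z u) - Pminus α (ρWerner p) (Pizu z u) =
      4 * p * Real.sin u * Real.sin z * Real.sin α / (-3 + Real.cos (2*α)) := by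
    rw [hP, hM, hsz, hc2]
    have h1 : (1 + Real.sin α ^ 2) ≠ 0 := ne_of_gt hden
    have h2 : (-3 + (1 - 2 * Real.sin α ^ 2)) ≠ 0 := by nlinarith
    rw [div_sub_div_same, div_eq_div_iff h1 h2]
    ring
  refine ⟨key, ?_⟩
  intro h
  have hz : 4 * p * Real.sin u * Real.sin z * Real.sin α = 0 := by
    rcases h with h | h | h <;> simp [h]
  have := key
  rw [hz] at this
  simp at this
  linarith [this]
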